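/- Let k ≥ 1 and let k_1,…,k_n be positive integers with k_1 + ⋯ + k_n = 2k. Over candidates {A,B,C}, consider the weighted profile consisting of: one voter of weight k with fixed vote C>A>B, one voter of weight k with fixed vote C>B>A, and for each i ∈ {1,…,n} a voter of weight k_i whose vote may be chosen arbitrarily among the strict linear orders ranking both A above C and B above C (namely A>B>C, B>A>C). Then there exists a choice of these votes under which C is a Copeland co-winner (equivalently, under which N(A,B) = N(B,A)) if and only if there exists a subset S ⊆ {1,…,n} with Σ_{i∈S} k_i = k. -/

import Mathlib

/-!
Over candidates {A,B,C}: fixed votes C>A>B (weight k) and C>B>A (weight k),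
plus for each i a voter of weight kᵢ whose vote may be chosen among the
linear orders ranking both A and B above C.  Some choice makes C a Copeland
co-winner iff some subset of the kᵢ sums to k.
-/

namespace Stmt9

inductive Cand where
  | A | B | C
deriving DecidableEq

instance : Fintype Cand where
  elems := {Cand.A, Cand.B, Cand.C}
  complete := by intro x; cases x <;> simp

open Cand

/-- `above l x y` : in the vote given by list `l` (best candidate first),
`x` is ranked above `y`. -/
def above (l : List Cand) (x y : Cand) : Prop := l.idxOf x < l.idxOf y

instance (l : List Cand) (x y : Cand) : Decidable (above l x y) :=
  inferInstanceAs (Decidable (_ < _))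

/-- Total weight of voters ranking `x` above `y`, where `f` gives the votes
of the manipulable voters. -/
def N (k : ℕ) {n : ℕ} (kk : Fin n → ℕ) (f : Fin n → List Cand) (x y : Cand) : ℕ :=
  (if above [C, A, B] x y then k else 0)
  + (if above [C, B, A] x y then k else 0)
  + ∑ i, (if above (f i) x y then kk i else 0)

/-- Copeland score of `x`: pairwise wins minus pairwise losses. -/
def copelandScore (N : Cand → Cand → ℕ) (x : Cand) : ℤ :=
  ∑ y ∈ Finset.univ.erase x,
    ((if N x y > N y x then 1 else 0) - (if N x y < N y x then 1 else 0) : ℤ)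

lemma erase_C : (Finset.univ.erase C : Finset Cand) = {A, B} := by decide
lemma erase_A : (Finset.univ.erase A : Finset Cand) = {B, C} := by decide
lemma erase_B : (Finset.univ.erase B : Finset Cand) = {A, C} := by decide

lemma score_C (M : Cand → Cand → ℕ) :
    copelandScore M C =
      ((if M C A > M A C then 1 else 0) - (if M C A < M A C then 1 else 0))
      + ((if M C B > M B C then 1 else 0) - (if M C B < M B C then 1 else 0)) := by
  rw [copelandScore, erase_C, Finset.sum_pair (by decide : A ≠ B)]

lemma score_A (M : Cand → Cand → ℕ) :
    copelandScore M A =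
      ((if M A B > M B A then 1 else 0) - (if M A B < M B A then 1 else 0))
      + ((if M A C > M C A then 1 else 0) - (if M A C < M C A then 1 else 0)) := by
  rw [copelandScore, erase_A, Finset.sum_pair (by decide : B ≠ C)]

lemma score_B (M : Cand → Cand → ℕ) :
    copelandScore M B =
      ((if M B A > M A B then 1 else 0) - (if M B A < M A B then 1 else 0))
      + ((if M B C > M C B then 1 else 0) - (if M B C < M C B then 1 else 0)) := by
  rw [copelandScore, erase_B, Finset.sum_pair (by decide : A ≠ C)]

section
variable {k n : ℕ} {kk : Fin n → ℕ} {f : Fin n → List Cand}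

lemma hcase (hf : ∀ i, f i ∈ [[A, B, C], [B, A, C]]) (i : Fin n) :
    f i = [A,B,C] ∨ f i = [B,A,C] := by simpa using hf i

lemma NAC (hf : ∀ i, f i ∈ [[A, B, C], [B, A, C]]) (hsum : ∑ i, kk i = 2 * k) :
    N k kk f A C = 2 * k := by
  have h : ∀ i, above (f i) A C := fun i => by
    rcases hcase hf i with h | h <;> rw [h] <;> decide
  simp [N, h, hsum, show ¬ above [C,A,B] A C from by decide,
    show ¬ above [C,B,A] A C from by decide]

lemma NCA (hf : ∀ i, f i ∈ [[A, B, C], [B, A, C]]) :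
    N k kk f C A = 2 * k := by
  have h : ∀ i, ¬ above (f i) C A := fun i => by
    rcases hcase hf i with h | h <;> rw [h] <;> decide
  simp [N, h, show above [C,A,B] C A from by decide,
    show above [C,B,A] C A from by decide, two_mul]

lemma NBC (hf : ∀ i, f i ∈ [[A, B, C], [B, A, C]]) (hsum : ∑ i, kk i = 2 * k) :
    N k kk f B C = 2 * k := by
  have h : ∀ i, above (f i) B C := fun i => by
    rcases hcase hf i with h | h <;> rw [h] <;> decide
  simp [N, h, hsum, show ¬ above [C,A,B] B C from by decide,
    show ¬ above [C,B,A] B C from by decide]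

lemma NCB (hf : ∀ i, f i ∈ [[A, B, C], [B, A, C]]) :
    N k kk f C B = 2 * k := by
  have h : ∀ i, ¬ above (f i) C B := fun i => by
    rcases hcase hf i with h | h <;> rw [h] <;> decide
  simp [N, h, show above [C,A,B] C B from by decide,
    show above [C,B,A] C B from by decide, two_mul]

lemma NAB (hf : ∀ i, f i ∈ [[A, B, C], [B, A, C]]) :
    N k kk f A B = k + ∑ i ∈ Finset.univ.filter (fun i => f i = [A,B,C]), kk i := by
  have h : ∀ i, above (f i) A B ↔ f i = [A,B,C] := fun i => by
    rcases hcase hf i with h | h <;> rw [h] <;> simp <;> decide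
  simp only [N, show above [C,A,B] A B from by decide,
    show ¬ above [C,B,A] A B from by decide, if_pos, if_neg, not_false_iff,
    Finset.sum_filter, h]
  simp [Finset.sum_filter]

lemma NBA (hf : ∀ i, f i ∈ [[A, B, C], [B, A, C]]) :
    N k kk f B A = k + ∑ i ∈ Finset.univ.filter (fun i => ¬ f i = [A,B,C]), kk i := by
  have h : ∀ i, above (f i) B A ↔ ¬ f i = [A,B,C] := fun i => by
    rcases hcase hf i with h | h <;> rw [h] <;> simp <;> decide
  simp [N, show ¬ above [C,A,B] B A from by decide,
    show above [C,B,A] B A from by decide, Finset.sum_filter, h]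

end


theorem copeland_preference_manipulation_iff_partition
    (k n : ℕ) (hk : 1 ≤ k) (kk : Fin n → ℕ) (hpos : ∀ i, 1 ≤ kk i)
    (hsum : ∑ i, kk i = 2 * k) :
    (∃ f : Fin n → List Cand,
        (∀ i, f i ∈ [[A, B, C], [B, A, C]]) ∧
        ∀ y : Cand, copelandScore (N k kk f) y ≤ copelandScore (N k kk f) C)
    ↔ ∃ S : Finset (Fin n), ∑ i ∈ S, kk i = k := by
  constructor
  · rintro ⟨f, hf, hC⟩
    set S := Finset.univ.filter (fun i => f i = [A,B,C]) with hS
    set s := ∑ i ∈ S, kk i with hs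
    set t := ∑ i ∈ Finset.univ.filter (fun i => ¬ f i = [A,B,C]), kk i with ht
    have hst : s + t = 2 * k := by
      rw [hs, ht, Finset.sum_filter_add_sum_filter_not, hsum]
    have hscoreC : copelandScore (N k kk f) C = 0 := by
      rw [score_C, NAC hf hsum, NCA hf, NBC hf hsum, NCB hf]; simp
    have hA := hC A
    have hB := hC B
    rw [hscoreC, score_A (N k kk f), NAC hf hsum, NCA hf, NAB hf, NBA hf] at hA
    rw [hscoreC, score_B (N k kk f), NBC hf hsum, NCB hf, NAB hf, NBA hf] at hB
    simp only [lt_self_iff_false, if_false, sub_zero, add_zero, if_neg] at hA hB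
    have heq : k + s = k + t := by
      by_contra hne
      rcases lt_or_gt_of_ne hne with h | h
      · have h' : s < t := by omega
        simp only [hs, ht, hS] at h'
        simp [h', not_lt.mpr h'.le] at hB
      · have h' : t < s := by omega
        simp only [hs, ht, hS] at h'
        simp [h', not_lt.mpr h'.le] at hA
    refine ⟨S, ?_⟩; omega
  · rintro ⟨S, hSk⟩
    refine ⟨fun i => if i ∈ S then [A,B,C] else [B,A,C], fun i => by by_cases h : i ∈ S <;> simp [h], ?_⟩
    have hf : ∀ i, (fun i => if i ∈ S then [A,B,C] else [B,A,C]) i ∈ [[A, B, C], [B, A, C]] :=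
      fun i => by by_cases h : i ∈ S <;> simp [h]
    set f : Fin n → List Cand := fun i => if i ∈ S then [A,B,C] else [B,A,C] with hfdef
    have hfilter : Finset.univ.filter (fun i => f i = [A,B,C]) = S := by
      ext i; by_cases h : i ∈ S <;> simp [hfdef, h]
    have hAB : N k kk f A B = 2 * k := by
      rw [NAB hf, hfilter, hSk]; ring
    have hBA : N k kk f B A = 2 * k := by
      rw [NBA hf]
      have : ∑ i ∈ Finset.univ.filter (fun i => ¬ f i = [A,B,C]), kk i = k := by
        have := Finset.sum_filter_add_sum_filter_not Finset.univ (fun i => f i = [A,B,C]) kk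
        rw [hfilter, hSk, hsum] at this; omega
      rw [this]; ring
    intro y
    have h0 : copelandScore (N k kk f) C = 0 := by
      rw [score_C, NAC hf hsum, NCA hf, NBC hf hsum, NCB hf]; simp
    rw [h0]
    cases y with
    | A => rw [score_A, NAC hf hsum, NCA hf, hAB, hBA]; simp
    | B => rw [score_B, NBC hf hsum, NCB hf, hAB, hBA]; simp
    | C => rw [h0]

end Stmt9
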